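/- If C and D are two strictly positive d1×d2 matrices with ∑_i C_{ij} = 1 for all j and ∑_j D_{ij} = 1 for all i, then C and D are compatible conditionals (i.e., there exists a strictly positive joint distribution P with C_{ij} = P_{ij}/∑_k P_{kj} and D_{ij} = P_{ij}/∑_l P_{il}) if and only if for all indices i1, i2 ∈ [d1] and j1, j2 ∈ [d2], C_{i1 j1} C_{i2 j2} D_{i1 j2} D_{i2 j1} = C_{i1 j2} C_{i2 j1} D_{i1 j1} D_{i2 j2}. -/

import Mathlib

set_option autoImplicit false

/-- For strictly positive conditional matrices, compatibility is equivalent to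
equality of all 2×2 odds ratios. -/
theorem positive_compatible_iff_odds_ratios (d1 d2 : ℕ) (hd1 : 0 < d1) (hd2 : 0 < d2)
    (C D : Fin d1 → Fin d2 → ℝ)
    (hC : ∀ i j, 0 < C i j) (hD : ∀ i j, 0 < D i j)
    (hCsum : ∀ j, ∑ i, C i j = 1) (hDsum : ∀ i, ∑ j, D i j = 1) :
    (∃ P : Fin d1 → Fin d2 → ℝ,
      (∀ i j, 0 < P i j) ∧ (∑ i, ∑ j, P i j = 1) ∧
      (∀ i j, C i j = P i j / ∑ k, P k j) ∧
      (∀ i j, D i j = P i j / ∑ l, P i l)) ↔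
    (∀ (i1 i2 : Fin d1) (j1 j2 : Fin d2),
      C i1 j1 * C i2 j2 * D i1 j2 * D i2 j1 = C i1 j2 * C i2 j1 * D i1 j1 * D i2 j2) := by
  haveI : Nonempty (Fin d1) := ⟨⟨0, hd1⟩⟩
  haveI : Nonempty (Fin d2) := ⟨⟨0, hd2⟩⟩
  constructor
  · rintro ⟨P, hPpos, hPsum, hPC, hPD⟩ i1 i2 j1 j2
    rw [hPC, hPC, hPC, hPC, hPD, hPD, hPD, hPD]
    ring
  · intro h
    set i0 : Fin d1 := ⟨0, hd1⟩ with hi0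
    set j0 : Fin d2 := ⟨0, hd2⟩ with hj0
    set P0 : Fin d1 → Fin d2 → ℝ := fun i j => C i j * D i0 j / C i0 j with hP0
    have hP0pos : ∀ i j, 0 < P0 i j := fun i j =>
      div_pos (mul_pos (hC i j) (hD i0 j)) (hC i0 j)
    have hrow0 : ∀ i, ∑ l, P0 i l = C i j0 * D i0 j0 / (C i0 j0 * D i j0) := by
      intro i
      have key : ∀ j, P0 i j = (C i j0 * D i0 j0 / (C i0 j0 * D i j0)) * D i j := by
        intro j
        have hh := h i i0 j j0
        simp only [hP0]
        field_simp [(hC i0 j).ne', (hC i0 j0).ne', (hD i j0).ne']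
        linear_combination hh
      rw [Finset.sum_congr rfl (fun j _ => key j), ← Finset.mul_sum, hDsum i, mul_one]
    have hcol0 : ∀ j, ∑ k, P0 k j = D i0 j / C i0 j := by
      intro j
      simp only [hP0, mul_div_assoc]
      rw [← Finset.sum_mul, hCsum j, one_mul]
    set Z : ℝ := ∑ i, ∑ j, P0 i j with hZ
    have hZpos : 0 < Z :=
      Finset.sum_pos (fun i _ => Finset.sum_pos (fun j _ => hP0pos i j) Finset.univ_nonempty)
        Finset.univ_nonempty
    refine ⟨fun i j => P0 i j / Z, fun i j => div_pos (hP0pos i j) hZpos, ?_, ?_, ?_⟩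
    · simp only [← Finset.sum_div]
      exact div_self hZpos.ne'
    · intro i j
      rw [← Finset.sum_div, hcol0 j]
      simp only [hP0]
      field_simp [(hC i0 j).ne', (hD i0 j).ne', hZpos.ne']
    · intro i j
      rw [← Finset.sum_div, hrow0 i]
      have hh := h i i0 j j0
      simp only [hP0]
      field_simp [(hC i0 j).ne', (hC i0 j0).ne', (hD i j0).ne', (hC i j0).ne', (hD i0 j0).ne', (hD i0 j).ne', hZpos.ne']
      linear_combination (-1) * hh
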